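/- Let p_i, p_j : [0,∞) → ℝ³ be twice differentiable with r = p_i − p_j, v = ṙ, and accelerations satisfying 2⟨r,u_i − u_j⟩ ≥ −2‖v‖² − 2(γ₁+γ₂)⟨r,v⟩ − γ₁γ₂(‖r‖² − r_s²) for all t ≥ 0, where u_i − u_j = r̈ and γ₁, γ₂ > 0. If ‖r(0)‖² ≥ r_s² and 2⟨r(0),v(0)⟩ + γ₁(‖r(0)‖² − r_s²) ≥ 0, then ‖r(t)‖ ≥ r_s for all t ≥ 0. -/

import Mathlib

open scoped RealInnerProductSpace

lemma gronwall_nonneg (K : ℝ) (f f' : ℝ → ℝ) (hf : ∀ t, HasDerivAt f (f' t) t)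
    (hK : ∀ t ∈ Set.Ici (0:ℝ), 0 ≤ f' t + K * f t) (h0 : 0 ≤ f 0) :
    ∀ t ∈ Set.Ici (0:ℝ), 0 ≤ f t := by
  intro t ht
  set F : ℝ → ℝ := fun t => Real.exp (K * t) * f t with hF
  have hFd : ∀ s, HasDerivAt F (Real.exp (K * s) * (f' s + K * f s)) s := by
    intro s
    have he : HasDerivAt (fun t => Real.exp (K * t)) (K * Real.exp (K * s)) s := by
      simpa [mul_comm] using ((hasDerivAt_id s).const_mul K).exp
    have := he.mul (hf s)
    refine this.congr_deriv ?_
    ring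
  have hmono : MonotoneOn F (Set.Ici (0:ℝ)) := by
    apply monotoneOn_of_deriv_nonneg (convex_Ici 0)
    · exact (Continuous.continuousOn (by continuity : Continuous fun t => Real.exp (K*t))).mul
        (fun s _ => (hf s).continuousAt.continuousWithinAt)
    · exact fun s _ => ((hFd s).differentiableAt).differentiableWithinAt
    · intro s hs
      rw [(hFd s).deriv]
      have : (0:ℝ) ≤ s := le_of_lt (by simpa using hs)
      exact mul_nonneg (Real.exp_pos _).le (hK s this)
  have h1 : F 0 ≤ F t := hmono Set.self_mem_Ici ht ht
  have h2 : F 0 = f 0 := by simp [hF]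
  have h3 : 0 ≤ F t := by rw [h2] at h1; linarith
  have h4 : F t = Real.exp (K * t) * f t := rfl
  have := Real.exp_pos (K * t)
  rw [h4] at h3
  nlinarith [h3]

/-- HOCBF collision avoidance for two double-integrator agents: if the affine
second-order HOCBF constraint holds for all `t ≥ 0` and the initial conditions
`‖r(0)‖² ≥ r_s²` and `2⟪r(0),v(0)⟫ + γ₁(‖r(0)‖² − r_s²) ≥ 0` hold,
then `‖r(t)‖ ≥ r_s` for all `t ≥ 0`. -/
theorem hocbf_collision_avoidance
    (pi pj vi vj ui uj : ℝ → EuclideanSpace ℝ (Fin 3)) (rs γ₁ γ₂ : ℝ)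
    (hγ₁ : 0 < γ₁) (hγ₂ : 0 < γ₂)
    (hpi : ∀ t, HasDerivAt pi (vi t) t) (hpj : ∀ t, HasDerivAt pj (vj t) t)
    (hvi : ∀ t, HasDerivAt vi (ui t) t) (hvj : ∀ t, HasDerivAt vj (uj t) t)
    (hcont : Continuous ui) (hcont' : Continuous uj)
    (hconstraint : ∀ t ∈ Set.Ici (0 : ℝ),
      2 * ⟪pi t - pj t, ui t - uj t⟫ ≥
        -2 * ‖vi t - vj t‖ ^ 2 - 2 * (γ₁ + γ₂) * ⟪pi t - pj t, vi t - vj t⟫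
          - γ₁ * γ₂ * (‖pi t - pj t‖ ^ 2 - rs ^ 2))
    (h0 : ‖pi 0 - pj 0‖ ^ 2 ≥ rs ^ 2)
    (hψ1 : 2 * ⟪pi 0 - pj 0, vi 0 - vj 0⟫ + γ₁ * (‖pi 0 - pj 0‖ ^ 2 - rs ^ 2) ≥ 0) :
    ∀ t ∈ Set.Ici (0 : ℝ), ‖pi t - pj t‖ ≥ rs := by
  set r : ℝ → EuclideanSpace ℝ (Fin 3) := fun t => pi t - pj t with hrdef
  set v : ℝ → EuclideanSpace ℝ (Fin 3) := fun t => vi t - vj t with hvdef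
  set u : ℝ → EuclideanSpace ℝ (Fin 3) := fun t => ui t - uj t with hudef
  have hr : ∀ t, HasDerivAt r (v t) t := fun t => (hpi t).sub (hpj t)
  have hv : ∀ t, HasDerivAt v (u t) t := fun t => (hvi t).sub (hvj t)
  -- derivative of h(t) = ‖r t‖² - rs²
  have hnorm : ∀ t, HasDerivAt (fun t => ‖r t‖ ^ 2 - rs ^ 2) (2 * ⟪r t, v t⟫) t := by
    intro t
    have h1 : HasDerivAt (fun t => ⟪r t, r t⟫) (⟪r t, v t⟫ + ⟪v t, r t⟫) t :=
      (hr t).inner ℝ (hr t)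
    have h2 : (fun t => ⟪r t, r t⟫ - rs ^ 2) = fun t => ‖r t‖ ^ 2 - rs ^ 2 := by
      funext s; rw [real_inner_self_eq_norm_sq]
    have := (h1.sub_const (rs ^ 2))
    rw [h2] at this
    refine this.congr_deriv ?_
    rw [real_inner_comm (v t) (r t)]; ring
  -- ψ₁ and its derivative
  have hψd : ∀ t, HasDerivAt (fun t => 2 * ⟪r t, v t⟫ + γ₁ * (‖r t‖ ^ 2 - rs ^ 2))
      (2 * (⟪r t, u t⟫ + ⟪v t, v t⟫) + γ₁ * (2 * ⟪r t, v t⟫)) t := by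
    intro t
    exact (((hr t).inner ℝ (hv t)).const_mul 2).add ((hnorm t).const_mul γ₁)
  -- step 1 : ψ₁ ≥ 0 on Ici 0
  have step1 : ∀ t ∈ Set.Ici (0:ℝ),
      0 ≤ 2 * ⟪r t, v t⟫ + γ₁ * (‖r t‖ ^ 2 - rs ^ 2) := by
    apply gronwall_nonneg γ₂ _ _ hψd
    · intro t ht
      have hc := hconstraint t ht
      have hvv : ⟪v t, v t⟫ = ‖v t‖ ^ 2 := real_inner_self_eq_norm_sq _
      simp only [hrdef, hvdef, hudef] at *
      nlinarith [hc]
    · exact hψ1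
  -- step 2 : h ≥ 0 on Ici 0
  have step2 : ∀ t ∈ Set.Ici (0:ℝ), 0 ≤ ‖r t‖ ^ 2 - rs ^ 2 := by
    apply gronwall_nonneg γ₁ _ _ hnorm
    · intro t ht
      have := step1 t ht
      linarith
    · linarith [h0]
  intro t ht
  have := step2 t ht
  have hn := norm_nonneg (r t)
  nlinarith [this, hn]
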